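/- Let C_1, ..., C_n be {−1, +1}-valued random variables on a probability space (Ω, F, P) such that P(C_1 = +1) ≤ 3/4 and, for every i with 2 ≤ i ≤ n and every vector v ∈ {−1, +1}^{i−1} with P((C_1, ..., C_{i−1}) = v) > 0, P(C_i = +1 | (C_1, ..., C_{i−1}) = v) ≤ 3/4. Let C̄_n := (1/n)·Σ_{i=1}^n C_i. Then for every real number z, P(C̄_n > z) ≤ P(B_{n,3/4} > (n/2)·(z + 1)), where B_{n,3/4} denotes a Binomial random variable with n trials and success probability 3/4. -/

import Mathlib

open MeasureTheory ProbabilityTheory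
open scoped ENNReal

noncomputable def F (m k : ℕ) : ℝ≥0∞ :=
  ∑ j ∈ (Finset.range (m+1)).filter (fun j => k ≤ j),
    (m.choose j : ℝ≥0∞) * (3/4)^j * (1/4)^(m-j)

lemma F_zero (m : ℕ) : F m 0 = 1 := by
  have h : (1:ℝ≥0∞) = ((3:ℝ≥0∞)/4 + 1/4) ^ m := by
    rw [ENNReal.div_add_div_same]
    norm_num
    rw [ENNReal.div_self (by norm_num) (by norm_num), one_pow]
  rw [h, add_pow]
  unfold F
  rw [Finset.filter_true_of_mem (by intros; exact Nat.zero_le _)]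
  apply Finset.sum_congr rfl
  intro j hj
  ring

lemma F_succ (m k : ℕ) (hk : 1 ≤ k) :
    F (m+1) k = 1/4 * F m k + 3/4 * F m (k-1) := by
  have hk0 : ¬ (k ≤ 0) := by omega
  unfold F
  rw [Finset.sum_filter, Finset.sum_filter, Finset.sum_filter]
  rw [Finset.sum_range_succ' _ (m+1)]
  simp only [hk0, if_false, add_zero]
  have hterm : ∀ i ∈ Finset.range (m+1),
      (if k ≤ i+1 then ((m+1).choose (i+1) : ℝ≥0∞) * (3/4)^(i+1) * (1/4)^(m+1-(i+1)) else 0)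
      = 3/4 * (if k-1 ≤ i then (m.choose i : ℝ≥0∞) * (3/4)^i * (1/4)^(m-i) else 0)
        + (if k ≤ i+1 then (m.choose (i+1) : ℝ≥0∞) * (3/4)^(i+1) * (1/4)^(m-i) else 0) := by
    intro i hi
    have h1 : (k ≤ i+1) ↔ (k-1 ≤ i) := by omega
    have h2 : m+1-(i+1) = m-i := by omega
    have h3 : ((m+1).choose (i+1) : ℝ≥0∞) = m.choose i + m.choose (i+1) := by
      rw [Nat.choose_succ_succ]; push_cast; ring
    rw [h2, h3]
    by_cases hki : k ≤ i + 1
    · rw [if_pos hki, if_pos (h1.mp hki), if_pos hki]; ring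
    · rw [if_neg hki, if_neg (fun h => hki (h1.mpr h)), if_neg hki, mul_zero, add_zero]
  rw [Finset.sum_congr rfl hterm, Finset.sum_add_distrib, ← Finset.mul_sum]
  have hS2 : (∑ i ∈ Finset.range (m+1),
      (if k ≤ i+1 then (m.choose (i+1) : ℝ≥0∞) * (3/4)^(i+1) * (1/4)^(m-i) else 0))
      = 1/4 * ∑ j ∈ Finset.range (m+1),
          (if k ≤ j then (m.choose j : ℝ≥0∞) * (3/4)^j * (1/4)^(m-j) else 0) := by
    set f : ℕ → ℝ≥0∞ := fun j => if k ≤ j then (m.choose j : ℝ≥0∞) * (3/4)^j * (1/4)^(m+1-j) else 0 with hf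
    have step1 : ∀ i ∈ Finset.range (m+1),
        (if k ≤ i+1 then (m.choose (i+1) : ℝ≥0∞) * (3/4)^(i+1) * (1/4)^(m-i) else 0) = f (i+1) := by
      intro i hi
      rw [hf]
      simp only []
      rw [show m+1-(i+1) = m-i by omega]
    rw [Finset.sum_congr rfl step1]
    have e1 : ∑ j ∈ Finset.range (m+2), f j = (∑ i ∈ Finset.range (m+1), f (i+1)) + f 0 :=
      Finset.sum_range_succ' f (m+1)
    have hf0 : f 0 = 0 := by rw [hf]; simp [hk0]
    have hftop : f (m+1) = 0 := by rw [hf]; simp [Nat.choose_succ_self]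
    have e2 : ∑ j ∈ Finset.range (m+2), f j = (∑ j ∈ Finset.range (m+1), f j) + f (m+1) :=
      Finset.sum_range_succ f (m+1)
    have e3 : (∑ i ∈ Finset.range (m+1), f (i+1)) = ∑ j ∈ Finset.range (m+1), f j := by
      rw [← add_zero (∑ i ∈ Finset.range (m+1), f (i+1)), ← hf0, ← e1, e2, hftop, add_zero]
    rw [e3, Finset.mul_sum]
    apply Finset.sum_congr rfl
    intro j hj
    rw [hf]
    simp only []
    rw [show m+1-j = (m-j)+1 by simp at hj; omega]
    split <;> ring
  rw [hS2]
  exact add_comm _ _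

/-- under the same hypotheses as Statement 11, with
`C̄_n := (1/n)·Σ_{i=1}^n C_i`, for every real `z`,
`P(C̄_n > z) ≤ P(B_{n,3/4} > (n/2)(z+1))`, where the right-hand side is the
binomial probability `∑_{j : (n/2)(z+1) < j} (n choose j) (3/4)^j (1/4)^{n−j}`. -/
theorem stmt12 {Ω : Type*} [MeasurableSpace Ω] (P : Measure Ω) [IsProbabilityMeasure P]
    (n : ℕ) (hn : 0 < n)
    (C : ℕ → Ω → ℝ) (hCmeas : ∀ i, Measurable (C i))
    (hCv : ∀ i ω, C i ω = 1 ∨ C i ω = -1)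
    (hfirst : P {ω | C 0 ω = 1} ≤ 3/4)
    (hcond : ∀ i, 1 ≤ i → i < n → ∀ v : Fin i → ℝ,
      0 < P {ω | ∀ j : Fin i, C j ω = v j} →
      P[|{ω | ∀ j : Fin i, C j ω = v j}] {ω | C i ω = 1} ≤ 3/4)
    (z : ℝ) :
    P {ω | z < (∑ i ∈ Finset.range n, C i ω) / n} ≤
      ∑ j ∈ (Finset.range (n + 1)).filter (fun j : ℕ => (n : ℝ)/2 * (z + 1) < (j : ℝ)),
        (n.choose j : ℝ≥0∞) * (3/4)^j * (1/4)^(n - j) := by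
  classical
  set Bs : ℕ → Set Ω := fun i => {ω | C i ω = 1} with hBs
  have hBmeas : ∀ i, MeasurableSet (Bs i) := fun i => (hCmeas i) (measurableSet_singleton 1)
  set Nc : ℕ → Ω → ℕ := fun m ω => ∑ i ∈ Finset.range m, if C i ω = 1 then 1 else 0 with hNc
  have hNcmeas : ∀ m, Measurable (Nc m) := by
    intro m
    apply Finset.measurable_sum
    intro i _
    exact Measurable.ite (hBmeas i) measurable_const measurable_const
  set cyl : (m : ℕ) → Finset (Fin m) → Set Ω :=
    fun m s => {ω | ∀ j : Fin m, C j ω = if j ∈ s then 1 else -1} with hcyl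
  have hcylmeas : ∀ m s, MeasurableSet (cyl m s) := by
    intro m s
    have h : cyl m s = ⋂ j : Fin m, {ω | C j ω = if j ∈ s then 1 else -1} := by
      ext ω; simp [hcyl, Set.mem_iInter]
    rw [h]
    exact MeasurableSet.iInter fun j => (hCmeas j) (measurableSet_singleton _)
  have hcount : ∀ m (s : Finset (Fin m)) ω, ω ∈ cyl m s → Nc m ω = s.card := by
    intro m s ω hω
    rw [hNc]
    simp only []
    rw [← Fin.sum_univ_eq_sum_range (fun i => if C i ω = 1 then 1 else 0) m]
    have hj : ∀ j : Fin m, (if C (j:ℕ) ω = 1 then (1:ℕ) else 0) = if j ∈ s then 1 else 0 := by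
      intro j
      have hcj := hω j
      by_cases hjs : j ∈ s
      · rw [if_pos hjs] at hcj ⊢; rw [if_pos hcj]
      · rw [if_neg hjs] at hcj ⊢
        rw [if_neg (by rw [hcj]; norm_num)]
    rw [Finset.sum_congr rfl (fun j _ => hj j)]
    simp
  have hmemcyl : ∀ m ω, ω ∈ cyl m (Finset.univ.filter (fun j : Fin m => C (j:ℕ) ω = 1)) := by
    intro m ω j
    by_cases h1 : C (j:ℕ) ω = 1
    · simp [h1]
    · rcases hCv (j:ℕ) ω with h | h
      · exact absurd h h1
      · simp [h1, h]
  have hpart : ∀ m c, {ω | Nc m ω = c}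
      = ⋃ s ∈ Finset.univ.filter (fun s : Finset (Fin m) => s.card = c), cyl m s := by
    intro m c
    ext ω
    simp only [Set.mem_setOf_eq, Set.mem_iUnion, Finset.mem_filter, Finset.mem_univ, true_and,
      exists_prop]
    constructor
    · intro h
      refine ⟨Finset.univ.filter (fun j : Fin m => C (j:ℕ) ω = 1), ?_, hmemcyl m ω⟩
      rw [← hcount m _ ω (hmemcyl m ω), h]
    · rintro ⟨s, hsc, hωs⟩
      rw [hcount m s ω hωs, hsc]
  have hdisj : ∀ m, ∀ s t : Finset (Fin m), s ≠ t → Disjoint (cyl m s) (cyl m t) := by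
    intro m s t hst
    rw [Set.disjoint_left]
    intro ω hωs hωt
    apply hst
    ext j
    have h1 := hωs j
    have h2 := hωt j
    by_cases hjs : j ∈ s <;> by_cases hjt : j ∈ t
    · simp [hjs, hjt]
    · rw [if_pos hjs] at h1; rw [if_neg hjt] at h2; rw [h1] at h2; norm_num at h2
    · rw [if_neg hjs] at h1; rw [if_pos hjt] at h2; rw [h1] at h2; norm_num at h2
    · simp [hjs, hjt]
  have key1 : ∀ m, m < n → ∀ s : Finset (Fin m), P (cyl m s ∩ Bs m) ≤ 3/4 * P (cyl m s) := by
    intro m hm s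
    rcases Nat.eq_zero_or_pos m with hm0 | hm1
    · subst hm0
      have h : cyl 0 s = Set.univ := by ext ω; simp [hcyl]
      rw [h, Set.univ_inter, measure_univ, mul_one]
      exact hfirst
    · by_cases hA : P (cyl m s) = 0
      · calc P (cyl m s ∩ Bs m) ≤ P (cyl m s) := measure_mono Set.inter_subset_left
          _ = 0 := hA
          _ ≤ _ := zero_le
      · have hpos : 0 < P (cyl m s) := pos_iff_ne_zero.mpr hA
        have hc : P[|cyl m s] (Bs m) ≤ 3/4 :=
          hcond m hm1 hm (fun j => if j ∈ s then (1:ℝ) else -1) hpos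
        rw [cond_apply (hcylmeas m s) P] at hc
        have hne : P (cyl m s) ≠ ⊤ := measure_ne_top P _
        calc P (cyl m s ∩ Bs m)
            = P (cyl m s) * ((P (cyl m s))⁻¹ * P (cyl m s ∩ Bs m)) := by
              rw [← mul_assoc, ENNReal.mul_inv_cancel hA hne, one_mul]
          _ ≤ P (cyl m s) * (3/4) := mul_le_mul_right hc _
          _ = 3/4 * P (cyl m s) := mul_comm _ _
  have key2 : ∀ m, m < n → ∀ c, P ({ω | Nc m ω = c} ∩ Bs m) ≤ 3/4 * P {ω | Nc m ω = c} := by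
    intro m hm c
    set S := Finset.univ.filter (fun s : Finset (Fin m) => s.card = c) with hS
    have hp := hpart m c
    have hPD : (S : Set (Finset (Fin m))).PairwiseDisjoint (cyl m) :=
      fun s _ t _ hst => hdisj m s t hst
    calc P ({ω | Nc m ω = c} ∩ Bs m) = P (⋃ s ∈ S, (cyl m s ∩ Bs m)) := by
          rw [hp, Set.iUnion₂_inter]
      _ ≤ ∑ s ∈ S, P (cyl m s ∩ Bs m) := measure_biUnion_finset_le S _
      _ ≤ ∑ s ∈ S, 3/4 * P (cyl m s) := Finset.sum_le_sum fun s _ => key1 m hm s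
      _ = 3/4 * ∑ s ∈ S, P (cyl m s) := (Finset.mul_sum _ _ _).symm
      _ = 3/4 * P (⋃ s ∈ S, cyl m s) := by
          rw [measure_biUnion_finset hPD (fun s _ => hcylmeas m s)]
      _ = 3/4 * P {ω | Nc m ω = c} := by rw [← hp]
  have hone : ∀ x : ℝ≥0∞, 1/4 * x + 3/4 * x = x := by
    intro x
    rw [← add_mul, ENNReal.div_add_div_same]
    norm_num
    rw [ENNReal.div_self (by norm_num) (by norm_num), one_mul]
  have key3 : ∀ m, m < n → ∀ k, 1 ≤ k →
      P {ω | k ≤ Nc (m+1) ω} ≤ 1/4 * P {ω | k ≤ Nc m ω} + 3/4 * P {ω | k-1 ≤ Nc m ω} := by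
    intro m hm k hk
    have hNsucc : ∀ ω, Nc (m+1) ω = Nc m ω + if C m ω = 1 then 1 else 0 := by
      intro ω; rw [hNc]; exact Finset.sum_range_succ _ m
    have hsub : {ω | k ≤ Nc (m+1) ω} ⊆ {ω | k ≤ Nc m ω} ∪ ({ω | Nc m ω = k-1} ∩ Bs m) := by
      intro ω hω
      simp only [Set.mem_setOf_eq] at hω
      rw [hNsucc ω] at hω
      by_cases h1 : k ≤ Nc m ω
      · exact Or.inl h1
      · right
        by_cases h2 : C m ω = 1
        · rw [if_pos h2] at hω
          exact ⟨by simp only [Set.mem_setOf_eq]; omega, h2⟩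
        · rw [if_neg h2, add_zero] at hω
          exact absurd hω h1
    have hU : P {ω | k-1 ≤ Nc m ω} = P {ω | k ≤ Nc m ω} + P {ω | Nc m ω = k-1} := by
      have hset : {ω | k-1 ≤ Nc m ω} = {ω | k ≤ Nc m ω} ∪ {ω | Nc m ω = k-1} := by
        ext ω; simp only [Set.mem_setOf_eq, Set.mem_union]; omega
      have hd : Disjoint {ω | k ≤ Nc m ω} {ω | Nc m ω = k-1} := by
        rw [Set.disjoint_left]
        intro ω h1 h2
        simp only [Set.mem_setOf_eq] at h1 h2
        omega
      rw [hset, measure_union hd ((hNcmeas m) (measurableSet_singleton _))]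
    calc P {ω | k ≤ Nc (m+1) ω}
        ≤ P ({ω | k ≤ Nc m ω} ∪ ({ω | Nc m ω = k-1} ∩ Bs m)) := measure_mono hsub
      _ ≤ P {ω | k ≤ Nc m ω} + P ({ω | Nc m ω = k-1} ∩ Bs m) := measure_union_le _ _
      _ ≤ P {ω | k ≤ Nc m ω} + 3/4 * P {ω | Nc m ω = k-1} :=
          add_le_add le_rfl (key2 m hm _)
      _ = 1/4 * P {ω | k ≤ Nc m ω} + 3/4 * P {ω | k-1 ≤ Nc m ω} := by
          rw [hU, mul_add, ← add_assoc, hone]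
  have key4 : ∀ m, m ≤ n → ∀ k, P {ω | k ≤ Nc m ω} ≤ F m k := by
    intro m
    induction m with
    | zero =>
      intro _ k
      rcases Nat.eq_zero_or_pos k with rfl | hk
      · rw [F_zero]; exact prob_le_one
      · have h : {ω | k ≤ Nc 0 ω} = ∅ := by
          ext ω
          simp only [Set.mem_setOf_eq, Set.mem_empty_iff_false, iff_false, not_le, hNc]
          simpa using hk
        rw [h]
        simp
    | succ m ih =>
      intro hm k
      have hm' : m < n := hm
      rcases Nat.eq_zero_or_pos k with rfl | hk
      · rw [F_zero]; exact prob_le_one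
      · rw [F_succ m k hk]
        calc P {ω | k ≤ Nc (m+1) ω}
            ≤ 1/4 * P {ω | k ≤ Nc m ω} + 3/4 * P {ω | k-1 ≤ Nc m ω} := key3 m hm' k hk
          _ ≤ 1/4 * F m k + 3/4 * F m (k-1) :=
              add_le_add (mul_le_mul_right (ih hm'.le k) _) (mul_le_mul_right (ih hm'.le _) _)
  -- final assembly
  set t : ℝ := (n:ℝ)/2 * (z+1) with ht
  set k : ℕ := (⌊t⌋ + 1).toNat with hkk
  have hiff : ∀ j : ℕ, (t < (j:ℝ)) ↔ k ≤ j := by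
    intro j
    constructor
    · intro h
      have h2 : ⌊t⌋ < (j:ℤ) := Int.floor_lt.mpr (by exact_mod_cast h)
      omega
    · intro h
      have h2 : ⌊t⌋ < (j:ℤ) := by omega
      exact_mod_cast Int.floor_lt.mp h2
  have hRHS : (∑ j ∈ (Finset.range (n + 1)).filter (fun j : ℕ => t < (j : ℝ)),
      (n.choose j : ℝ≥0∞) * (3/4)^j * (1/4)^(n - j)) = F n k := by
    unfold F
    apply Finset.sum_congr _ (fun _ _ => rfl)
    apply Finset.filter_congr
    intro j _
    exact hiff j
  have hsum : ∀ ω, ∑ i ∈ Finset.range n, C i ω = 2 * (Nc n ω : ℝ) - n := by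
    intro ω
    have h1 : ∀ i ∈ Finset.range n, C i ω = 2 * (if C i ω = 1 then (1:ℝ) else 0) - 1 := by
      intro i _
      rcases hCv i ω with h | h <;> rw [h] <;> norm_num
    rw [Finset.sum_congr rfl h1, Finset.sum_sub_distrib, ← Finset.mul_sum, Finset.sum_const,
      Finset.card_range, nsmul_eq_mul, mul_one]
    have h2 : ((Nc n ω : ℕ) : ℝ) = ∑ i ∈ Finset.range n, (if C i ω = 1 then (1:ℝ) else 0) := by
      rw [hNc]
      push_cast
      apply Finset.sum_congr rfl
      intro i _
      split <;> norm_num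
    rw [h2]
  have hn' : (0:ℝ) < n := by exact_mod_cast hn
  have hLHS : {ω | z < (∑ i ∈ Finset.range n, C i ω) / n} = {ω | k ≤ Nc n ω} := by
    ext ω
    simp only [Set.mem_setOf_eq]
    rw [hsum ω, lt_div_iff₀ hn']
    constructor
    · intro h
      refine (hiff (Nc n ω)).mp ?_
      rw [ht]
      linarith
    · intro h
      have h2 := (hiff (Nc n ω)).mpr h
      rw [ht] at h2
      linarith
  rw [hLHS, hRHS]
  exact key4 n le_rfl k
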